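/- Let q ≥ 3 be an integer and let a = a_1 a_2 … a_n ∈ C_{q,n} satisfy a_i = a_{i+2} for every i with 1 ≤ i ≤ n−2. If n = 2 then |H_2(a)| = q^2 − 3q + 3, and if n ≥ 3 then |H_2(a)| = (1/2)(n−4)(n−3)(q−2)^2 + n(3q^2 − 13q + 14) − 6q^2 + 27q − 30 (an equality of integers, the product (n−4)(n−3) being even). -/

import Mathlib

open scoped Classical

/-- A sequence `a` of length `n` over an alphabet of size `q` is homopolymer free (HF)
if no two consecutive symbols are equal. -/
def isHF {q n : ℕ} (a : Fin n → Fin q) : Prop :=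
  ∀ i : ℕ, ∀ h : i + 1 < n, a ⟨i, by omega⟩ ≠ a ⟨i + 1, h⟩

/-- `HFset q n` is the set `C_{q,n}` of all HF sequences of length `n`. -/
noncomputable def HFset (q n : ℕ) : Finset (Fin n → Fin q) :=
  Finset.univ.filter isHF

/-- The HF sphere `H_r(a)`: all HF sequences at Hamming distance exactly `r` from `a`. -/
noncomputable def HFsphere {q n : ℕ} (a : Fin n → Fin q) (r : ℕ) :
    Finset (Fin n → Fin q) :=
  (HFset q n).filter (fun z => hammingDist a z = r)

open Finset

section auxcnt
variable {q : ℕ}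

/-- parity value function -/
def pvn {q : ℕ} (x y : Fin q) (m : ℕ) : Fin q := if m % 2 = 0 then x else y

lemma pvn_succ (x y : Fin q) (m : ℕ) : pvn x y (m + 1) = pvn y x m := by
  unfold pvn
  rcases Nat.even_or_odd m with h | h
  · have h0 : m % 2 = 0 := Nat.even_iff.mp h
    have h1 : (m + 1) % 2 = 1 := by omega
    simp [h0, h1]
  · have h0 : m % 2 = 1 := Nat.odd_iff.mp h
    have h1 : (m + 1) % 2 = 0 := by omega
    simp [h0, h1]

lemma pvn_ne {x y : Fin q} (hxy : x ≠ y) (m : ℕ) : pvn x y m ≠ pvn y x m := by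
  unfold pvn; split
  · exact hxy
  · exact hxy.symm

lemma card_ne1 (c : Fin q) : (univ.filter fun v : Fin q => v ≠ c).card = q - 1 := by
  have h : (univ.filter fun v : Fin q => v ≠ c) = univ \ {c} := by ext v; simp
  rw [h, card_sdiff_of_subset (subset_univ _), card_univ, Fintype.card_fin, card_singleton]

lemma card_ne2 {c d : Fin q} (h : c ≠ d) :
    (univ.filter fun v : Fin q => v ≠ c ∧ v ≠ d).card = q - 2 := by
  have hs : (univ.filter fun v : Fin q => v ≠ c ∧ v ≠ d) = univ \ {c, d} := by
    ext v; simp [not_or]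
  rw [hs, card_sdiff_of_subset (subset_univ _), card_univ, Fintype.card_fin, card_pair h]

lemma card_ne3 {c d e : Fin q} (hcd : c ≠ d) (hce : c ≠ e) (hde : d ≠ e) :
    (univ.filter fun v : Fin q => v ≠ c ∧ v ≠ d ∧ v ≠ e).card = q - 3 := by
  have hs : (univ.filter fun v : Fin q => v ≠ c ∧ v ≠ d ∧ v ≠ e) = univ \ {c, d, e} := by
    ext v; simp [not_or]
  rw [hs, card_sdiff_of_subset (subset_univ _), card_univ, Fintype.card_fin]
  have h3 : ({c, d, e} : Finset (Fin q)).card = 3 := by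
    rw [card_insert_of_notMem (by simp [hcd, hce]), card_pair hde]
  rw [h3]

lemma card_filter_prod (S : Fin q × Fin q → Prop) [DecidablePred S] :
    ((univ : Finset (Fin q × Fin q)).filter S).card
      = ∑ u : Fin q, (univ.filter fun v => S (u, v)).card := by
  rw [Finset.card_filter, Fintype.sum_prod_type]
  exact Finset.sum_congr rfl fun u _ => (Finset.card_filter _ _).symm

lemma card_filter_prod_right (S : Fin q × Fin q → Prop) [DecidablePred S] :
    ((univ : Finset (Fin q × Fin q)).filter S).card
      = ∑ v : Fin q, (univ.filter fun u => S (u, v)).card := by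
  rw [Finset.card_filter, Fintype.sum_prod_type_right]
  exact Finset.sum_congr rfl fun v _ => (Finset.card_filter _ _).symm

lemma sum_ite_card {R : Fin q → Prop} [DecidablePred R] (c : ℕ) :
    (∑ u : Fin q, if R u then c else 0) = (univ.filter R).card * c := by
  rw [← Finset.sum_filter, Finset.sum_const, smul_eq_mul]

lemma cntNonadj (hq : 3 ≤ q) {c d c' d' : Fin q} (h : c ≠ d) (h' : c' ≠ d') :
    ((univ : Finset (Fin q × Fin q)).filter fun w =>
      (w.1 ≠ c ∧ w.1 ≠ d) ∧ (w.2 ≠ c' ∧ w.2 ≠ d')).card = (q - 2) * (q - 2) := by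
  refine (card_filter_prod _).trans ?_
  have key : ∀ u : Fin q,
      (univ.filter fun v => (u ≠ c ∧ u ≠ d) ∧ (v ≠ c' ∧ v ≠ d')).card
        = if u ≠ c ∧ u ≠ d then q - 2 else 0 := by
    intro u
    by_cases hu : u ≠ c ∧ u ≠ d
    · rw [if_pos hu]
      refine Eq.trans ?_ (card_ne2 h')
      congr 1; ext v; simp [hu]
    · rw [if_neg hu]
      rw [Finset.filter_false_of_mem (fun v _ => by tauto), card_empty]
  rw [Finset.sum_congr rfl fun u _ => key u, sum_ite_card, card_ne2 h]

lemma cntInterior (hq : 3 ≤ q) {c d : Fin q} (h : c ≠ d) :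
    ((univ : Finset (Fin q × Fin q)).filter fun w =>
      (w.1 ≠ c ∧ w.1 ≠ d) ∧ (w.2 ≠ c ∧ w.2 ≠ d ∧ w.2 ≠ w.1)).card = (q - 2) * (q - 3) := by
  refine (card_filter_prod _).trans ?_
  have key : ∀ u : Fin q,
      (univ.filter fun v => (u ≠ c ∧ u ≠ d) ∧ (v ≠ c ∧ v ≠ d ∧ v ≠ u)).card
        = if u ≠ c ∧ u ≠ d then q - 3 else 0 := by
    intro u
    by_cases hu : u ≠ c ∧ u ≠ d
    · rw [if_pos hu]
      refine Eq.trans ?_ (card_ne3 h (Ne.symm hu.1) (Ne.symm hu.2))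
      congr 1; ext v; simp [hu]
    · rw [if_neg hu]
      rw [Finset.filter_false_of_mem (fun v _ => by tauto), card_empty]
  rw [Finset.sum_congr rfl fun u _ => key u, sum_ite_card, card_ne2 h]

lemma cntRight (hq : 3 ≤ q) {c d e : Fin q} (h : c ≠ d) (he : e = c ∨ e = d) :
    ((univ : Finset (Fin q × Fin q)).filter fun w =>
      (w.1 ≠ c ∧ w.1 ≠ d) ∧ (w.2 ≠ e ∧ w.2 ≠ w.1)).card = (q - 2) * (q - 2) := by
  refine (card_filter_prod _).trans ?_
  have key : ∀ u : Fin q,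
      (univ.filter fun v => (u ≠ c ∧ u ≠ d) ∧ (v ≠ e ∧ v ≠ u)).card
        = if u ≠ c ∧ u ≠ d then q - 2 else 0 := by
    intro u
    by_cases hu : u ≠ c ∧ u ≠ d
    · rw [if_pos hu]
      have heu : e ≠ u := by
        rcases he with rfl | rfl
        · exact Ne.symm hu.1
        · exact Ne.symm hu.2
      refine Eq.trans ?_ (card_ne2 heu)
      congr 1; ext v; simp [hu]
    · rw [if_neg hu]
      rw [Finset.filter_false_of_mem (fun v _ => by tauto), card_empty]
  rw [Finset.sum_congr rfl fun u _ => key u, sum_ite_card, card_ne2 h]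

lemma cntLeft (hq : 3 ≤ q) {c d e : Fin q} (h : c ≠ d) (he : e = c ∨ e = d) :
    ((univ : Finset (Fin q × Fin q)).filter fun w =>
      w.1 ≠ e ∧ (w.2 ≠ c ∧ w.2 ≠ d) ∧ w.1 ≠ w.2).card = (q - 2) * (q - 2) := by
  refine (card_filter_prod_right _).trans ?_
  have key : ∀ v : Fin q,
      (univ.filter fun u => u ≠ e ∧ (v ≠ c ∧ v ≠ d) ∧ u ≠ v).card
        = if v ≠ c ∧ v ≠ d then q - 2 else 0 := by
    intro v
    by_cases hv : v ≠ c ∧ v ≠ d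
    · rw [if_pos hv]
      have hev : e ≠ v := by
        rcases he with rfl | rfl
        · exact Ne.symm hv.1
        · exact Ne.symm hv.2
      refine Eq.trans ?_ (card_ne2 hev)
      congr 1; ext u; simp [hv]
    · rw [if_neg hv]
      rw [Finset.filter_false_of_mem (fun u _ => by tauto), card_empty]
  rw [Finset.sum_congr rfl fun v _ => key v, sum_ite_card, card_ne2 h]

lemma cntTwo (hq : 3 ≤ q) {c d : Fin q} (h : c ≠ d) :
    ((univ : Finset (Fin q × Fin q)).filter fun w =>
      w.1 ≠ c ∧ (w.2 ≠ d ∧ w.2 ≠ w.1)).card = (q - 1) * (q - 2) + 1 := by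
  refine (card_filter_prod _).trans ?_
  have key : ∀ u : Fin q,
      (univ.filter fun v => u ≠ c ∧ (v ≠ d ∧ v ≠ u)).card
        = (if u ≠ c then q - 2 else 0) + (if u ≠ c ∧ u = d then 1 else 0) := by
    intro u
    by_cases hu : u ≠ c
    · by_cases hud : u = d
      · subst hud
        have h1 : (univ.filter fun v : Fin q => u ≠ c ∧ (v ≠ u ∧ v ≠ u)).card = q - 1 := by
          refine Eq.trans ?_ (card_ne1 u)
          congr 1; ext v; simp [hu]
        rw [h1, if_pos hu, if_pos ⟨hu, rfl⟩]
        omega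
      · have h1 : (univ.filter fun v : Fin q => u ≠ c ∧ (v ≠ d ∧ v ≠ u)).card = q - 2 := by
          refine Eq.trans ?_ (card_ne2 (fun hdu => hud hdu.symm))
          congr 1; ext v; simp [hu]
        rw [h1, if_pos hu, if_neg (by tauto)]
        omega
    · rw [Finset.filter_false_of_mem (fun v _ => by tauto), card_empty,
        if_neg hu, if_neg (by tauto)]
  rw [Finset.sum_congr rfl fun u _ => key u, Finset.sum_add_distrib, sum_ite_card, sum_ite_card,
    card_ne1]
  have h2 : (univ.filter fun u : Fin q => u ≠ c ∧ u = d).card = 1 := by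
    have hs : (univ.filter fun u : Fin q => u ≠ c ∧ u = d) = {d} := by
      ext u
      simp only [mem_filter, mem_univ, true_and, mem_singleton]
      constructor
      · exact fun hx => hx.2
      · rintro rfl; exact ⟨fun hdc => h hdc.symm, rfl⟩
    rw [hs, card_singleton]
  rw [h2, one_mul]

end auxcnt

/-- The condition on the pair of new values at positions `i < j`. -/
def Cond (n : ℕ) {q : ℕ} (x y : Fin q) (i j : ℕ) (w : Fin q × Fin q) : Prop :=
  w.1 ≠ pvn x y i ∧ w.2 ≠ pvn x y j ∧
  (0 < i → w.1 ≠ pvn y x i) ∧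
  (j = i + 1 → w.1 ≠ w.2) ∧
  (j ≠ i + 1 → w.1 ≠ pvn y x i ∧ w.2 ≠ pvn y x j) ∧
  (j + 1 < n → w.2 ≠ pvn y x j)

lemma hf_char {q n : ℕ} {x y : Fin q} (hxy : x ≠ y) {a : Fin n → Fin q}
    (pa : ∀ m : ℕ, ∀ hm : m < n, a ⟨m, hm⟩ = pvn x y m)
    {i j : ℕ} (hi : i < n) (hj : j < n) (hij : i < j) {z : Fin n → Fin q}
    (hz : ∀ k : Fin n, k.1 ≠ i → k.1 ≠ j → z k = a k)
    (hzi : z ⟨i, hi⟩ ≠ a ⟨i, hi⟩) (hzj : z ⟨j, hj⟩ ≠ a ⟨j, hj⟩) :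
    isHF z ↔ Cond n x y i j (z ⟨i, hi⟩, z ⟨j, hj⟩) := by
  constructor
  · intro hHF
    refine ⟨?_, ?_, ?_, ?_, ?_, ?_⟩
    · show z ⟨i, hi⟩ ≠ pvn x y i
      rw [← pa i hi]; exact hzi
    · show z ⟨j, hj⟩ ≠ pvn x y j
      rw [← pa j hj]; exact hzj
    · intro hi0
      show z ⟨i, hi⟩ ≠ pvn y x i
      obtain ⟨m, rfl⟩ : ∃ m, i = m + 1 := ⟨i - 1, by omega⟩
      have h1 := hHF m (by omega)
      have hzm : z ⟨m, by omega⟩ = a ⟨m, by omega⟩ :=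
        hz _ (show m ≠ m + 1 by omega) (show m ≠ j by omega)
      rw [hzm, pa m (by omega)] at h1
      rw [pvn_succ y x m]
      exact Ne.symm h1
    · intro hadj
      show z ⟨i, hi⟩ ≠ z ⟨j, hj⟩
      have h1 := hHF i (by omega)
      have e1 : (⟨i + 1, by omega⟩ : Fin n) = ⟨j, hj⟩ := Fin.ext (show i + 1 = j by omega)
      rw [e1] at h1
      exact h1
    · intro hnadj
      constructor
      · show z ⟨i, hi⟩ ≠ pvn y x i
        have h1 := hHF i (by omega)
        have hz1 : z ⟨i + 1, by omega⟩ = a ⟨i + 1, by omega⟩ :=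
          hz _ (show i + 1 ≠ i by omega) (show i + 1 ≠ j by omega)
        rw [hz1, pa (i + 1) (by omega), pvn_succ x y i] at h1
        exact h1
      · show z ⟨j, hj⟩ ≠ pvn y x j
        obtain ⟨m, rfl⟩ : ∃ m, j = m + 1 := ⟨j - 1, by omega⟩
        have h1 := hHF m (by omega)
        have hzm : z ⟨m, by omega⟩ = a ⟨m, by omega⟩ :=
          hz _ (show m ≠ i by omega) (show m ≠ m + 1 by omega)
        rw [hzm, pa m (by omega)] at h1
        rw [pvn_succ y x m]
        exact Ne.symm h1
    · intro hjn
      show z ⟨j, hj⟩ ≠ pvn y x j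
      have h1 := hHF j hjn
      have hz1 : z ⟨j + 1, hjn⟩ = a ⟨j + 1, hjn⟩ :=
        hz _ (show j + 1 ≠ i by omega) (show j + 1 ≠ j by omega)
      rw [hz1, pa (j + 1) hjn, pvn_succ x y j] at h1
      exact h1
  · intro hc
    obtain ⟨h1, h2, h3, h4, h5, h6⟩ := hc
    intro k hk
    by_cases hki : k = i
    · subst hki
      by_cases hk1j : k + 1 = j
      · have e1 : (⟨k + 1, hk⟩ : Fin n) = ⟨j, hj⟩ := Fin.ext hk1j
        rw [e1]
        exact h4 hk1j.symm
      · have hz1 : z ⟨k + 1, hk⟩ = a ⟨k + 1, hk⟩ :=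
          hz _ (show k + 1 ≠ k by omega) hk1j
        rw [hz1, pa (k + 1) hk, pvn_succ x y k]
        exact (h5 (fun h => hk1j h.symm)).1
    · by_cases hkj : k = j
      · subst hkj
        have hz1 : z ⟨k + 1, hk⟩ = a ⟨k + 1, hk⟩ :=
          hz _ (show k + 1 ≠ i by omega) (show k + 1 ≠ k by omega)
        rw [hz1, pa (k + 1) hk, pvn_succ x y k]
        exact h6 hk
      · have hzk : z ⟨k, by omega⟩ = a ⟨k, by omega⟩ := hz _ hki hkj
        by_cases hk1i : k + 1 = i
        · have e1 : (⟨k + 1, hk⟩ : Fin n) = ⟨i, hi⟩ := Fin.ext hk1i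
          rw [e1, hzk, pa k (by omega)]
          have h3' := h3 (by omega)
          have e2 : pvn y x i = pvn x y k := by
            rw [← hk1i, pvn_succ y x k]
          rw [e2] at h3'
          exact Ne.symm h3'
        · by_cases hk1j : k + 1 = j
          · have e1 : (⟨k + 1, hk⟩ : Fin n) = ⟨j, hj⟩ := Fin.ext hk1j
            rw [e1, hzk, pa k (by omega)]
            have h5' := (h5 (show j ≠ i + 1 by omega)).2
            have e2 : pvn y x j = pvn x y k := by
              rw [← hk1j, pvn_succ y x k]
            rw [e2] at h5'
            exact Ne.symm h5'
          · have hz1 : z ⟨k + 1, hk⟩ = a ⟨k + 1, hk⟩ := hz _ hk1i hk1j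
            rw [hzk, hz1, pa k (by omega), pa (k + 1) hk, pvn_succ x y k]
            exact pvn_ne hxy k

lemma cond_card {q n : ℕ} (hq : 3 ≤ q) (x y : Fin q) (hxy : x ≠ y) (i j : ℕ)
    (hij : i < j) (hjn : j < n) :
    ((univ : Finset (Fin q × Fin q)).filter (Cond n x y i j)).card
      = if j = i + 1 then
          (if i = 0 then (if j + 1 = n then (q-1)*(q-2)+1 else (q-2)*(q-2))
           else if j + 1 = n then (q-2)*(q-2) else (q-2)*(q-3))
        else (q-2)*(q-2) := by
  have hcc : pvn x y i ≠ pvn y x i := pvn_ne hxy i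
  by_cases hadj : j = i + 1
  · subst hadj
    have hd1 : pvn x y (i + 1) = pvn y x i := pvn_succ x y i
    have hd2 : pvn y x (i + 1) = pvn x y i := pvn_succ y x i
    rw [if_pos rfl]
    by_cases hi0 : i = 0
    · rw [if_pos hi0]
      by_cases hend : i + 1 + 1 = n
      · rw [if_pos hend]
        refine Eq.trans ?_ (cntTwo hq hcc)
        congr 1; ext w
        simp only [mem_filter, mem_univ, true_and, Cond]
        constructor
        · rintro ⟨c1, c2, _, c4, _, _⟩
          rw [hd1] at c2
          exact ⟨c1, c2, Ne.symm (c4 (by trivial))⟩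
        · rintro ⟨c1, c2, c3⟩
          exact ⟨c1, by rw [hd1]; exact c2, fun h => absurd h (by omega),
            fun _ => Ne.symm c3, by intro h; simp at h, fun h => absurd h (by omega)⟩
      · rw [if_neg hend]
        refine Eq.trans ?_ (cntLeft hq hcc (Or.inl rfl))
        congr 1; ext w
        simp only [mem_filter, mem_univ, true_and, Cond]
        constructor
        · rintro ⟨c1, c2, _, c4, _, c6⟩
          rw [hd1] at c2
          refine ⟨c1, ⟨?_, c2⟩, c4 (by trivial)⟩
          have := c6 (by omega)
          rw [hd2] at this
          exact this
        · rintro ⟨c1, ⟨c2a, c2b⟩, c3⟩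
          exact ⟨c1, by rw [hd1]; exact c2b, fun h => absurd h (by omega),
            fun _ => c3, by intro h; simp at h, fun _ => by rw [hd2]; exact c2a⟩
    · rw [if_neg hi0]
      by_cases hend : i + 1 + 1 = n
      · rw [if_pos hend]
        refine Eq.trans ?_ (cntRight hq hcc (Or.inr rfl))
        congr 1; ext w
        simp only [mem_filter, mem_univ, true_and, Cond]
        constructor
        · rintro ⟨c1, c2, c3, c4, _, _⟩
          rw [hd1] at c2
          exact ⟨⟨c1, c3 (by omega)⟩, c2, Ne.symm (c4 (by trivial))⟩
        · rintro ⟨⟨c1a, c1b⟩, c2a, c2b⟩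
          exact ⟨c1a, by rw [hd1]; exact c2a, fun _ => c1b,
            fun _ => Ne.symm c2b, by intro h; simp at h, fun h => absurd h (by omega)⟩
      · rw [if_neg hend]
        refine Eq.trans ?_ (cntInterior hq hcc)
        congr 1; ext w
        simp only [mem_filter, mem_univ, true_and, Cond]
        constructor
        · rintro ⟨c1, c2, c3, c4, _, c6⟩
          rw [hd1] at c2
          refine ⟨⟨c1, c3 (by omega)⟩, ?_, c2, Ne.symm (c4 (by trivial))⟩
          have := c6 (by omega)
          rw [hd2] at this
          exact this
        · rintro ⟨⟨c1a, c1b⟩, c2a, c2b, c2c⟩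
          exact ⟨c1a, by rw [hd1]; exact c2b, fun _ => c1b,
            fun _ => Ne.symm c2c, by intro h; simp at h, fun _ => by rw [hd2]; exact c2a⟩
  · rw [if_neg hadj]
    refine Eq.trans ?_ (cntNonadj hq hcc (pvn_ne hxy j))
    congr 1; ext w
    simp only [mem_filter, mem_univ, true_and, Cond]
    constructor
    · rintro ⟨c1, c2, _, _, c5, _⟩
      obtain ⟨c5a, c5b⟩ := c5 hadj
      exact ⟨⟨c1, c5a⟩, c2, c5b⟩
    · rintro ⟨⟨c1a, c1b⟩, c2a, c2b⟩
      exact ⟨c1a, c2a, fun _ => c1b, fun h => absurd h hadj,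
        fun _ => ⟨c1b, c2b⟩, fun _ => c2b⟩

/-- The classifying map of a sphere element: the (values of the) min and max of the
set of positions where it differs from `a`. -/
noncomputable def fmap {q n : ℕ} (a z : Fin n → Fin q) : ℕ × ℕ :=
  if h : (Finset.univ.filter fun k => a k ≠ z k).Nonempty then
    (((Finset.univ.filter fun k => a k ≠ z k).min' h).1,
     ((Finset.univ.filter fun k => a k ≠ z k).max' h).1)
  else (0, 0)

lemma pair_card {n : ℕ} {i j : ℕ} (hi : i < n) (hj : j < n) (hij : i < j) :
    ({⟨i, hi⟩, ⟨j, hj⟩} : Finset (Fin n)).card = 2 := by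
  rw [card_insert_of_notMem (by simp [Fin.ext_iff]; omega), card_singleton]

lemma mem_fiber {q n : ℕ} (a : Fin n → Fin q) {i j : ℕ} (hi : i < n) (hj : j < n)
    (hij : i < j) (z : Fin n → Fin q) :
    (z ∈ (HFsphere a 2).filter fun w => fmap a w = (i, j)) ↔
      (isHF z ∧ (Finset.univ.filter fun k => a k ≠ z k) = {⟨i, hi⟩, ⟨j, hj⟩}) := by
  have hdist : hammingDist a z = (Finset.univ.filter fun k => a k ≠ z k).card := rfl
  simp only [HFsphere, HFset, mem_filter, mem_univ, true_and]
  constructor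
  · rintro ⟨⟨hhf, hcard⟩, hf⟩
    refine ⟨hhf, ?_⟩
    rw [hdist] at hcard
    have hne : (Finset.univ.filter fun k => a k ≠ z k).Nonempty :=
      card_pos.mp (by omega)
    rw [fmap, dif_pos hne] at hf
    simp only [Prod.mk.injEq] at hf
    have hmin : (Finset.univ.filter fun k => a k ≠ z k).min' hne = ⟨i, hi⟩ :=
      Fin.ext hf.1
    have hmax : (Finset.univ.filter fun k => a k ≠ z k).max' hne = ⟨j, hj⟩ :=
      Fin.ext hf.2
    refine (Finset.eq_of_subset_of_card_le ?_ ?_).symm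
    · rw [Finset.insert_subset_iff]
      exact ⟨hmin ▸ Finset.min'_mem _ hne, Finset.singleton_subset_iff.mpr
        (hmax ▸ Finset.max'_mem _ hne)⟩
    · rw [hcard, pair_card hi hj hij]
  · rintro ⟨hhf, hDeq⟩
    have hcard : (Finset.univ.filter fun k => a k ≠ z k).card = 2 := by
      rw [hDeq, pair_card hi hj hij]
    have hne : (Finset.univ.filter fun k => a k ≠ z k).Nonempty :=
      card_pos.mp (by omega)
    refine ⟨⟨hhf, by rw [hdist, hcard]⟩, ?_⟩
    rw [fmap, dif_pos hne]
    have hmin : (Finset.univ.filter fun k => a k ≠ z k).min' hne = ⟨i, hi⟩ := by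
      apply le_antisymm
      · exact Finset.min'_le _ _ (by rw [hDeq]; exact mem_insert_self _ _)
      · apply Finset.le_min'
        intro m hm
        rw [hDeq] at hm
        rcases Finset.mem_insert.mp hm with rfl | hm
        · exact le_refl _
        · rw [Finset.mem_singleton.mp hm]
          exact le_of_lt (by exact hij)
    have hmax : (Finset.univ.filter fun k => a k ≠ z k).max' hne = ⟨j, hj⟩ := by
      apply le_antisymm
      · apply Finset.max'_le
        intro m hm
        rw [hDeq] at hm
        rcases Finset.mem_insert.mp hm with rfl | hm
        · exact le_of_lt (by exact hij)
        · rw [Finset.mem_singleton.mp hm]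
      · exact Finset.le_max' _ _ (by rw [hDeq]; exact mem_insert_of_mem (mem_singleton_self _))
    rw [hmin, hmax]

lemma fiber_card {q n : ℕ} {x y : Fin q} (hxy : x ≠ y) {a : Fin n → Fin q}
    (pa : ∀ m : ℕ, ∀ hm : m < n, a ⟨m, hm⟩ = pvn x y m)
    {i j : ℕ} (hi : i < n) (hj : j < n) (hij : i < j) :
    ((HFsphere a 2).filter fun z => fmap a z = (i, j)).card
      = ((univ : Finset (Fin q × Fin q)).filter (Cond n x y i j)).card := by
  have hIJ : (⟨i, hi⟩ : Fin n) ≠ ⟨j, hj⟩ := by simp only [ne_eq, Fin.mk.injEq]; omega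
  refine Finset.card_nbij' (fun z => (z ⟨i, hi⟩, z ⟨j, hj⟩))
    (fun w => Function.update (Function.update a ⟨i, hi⟩ w.1) ⟨j, hj⟩ w.2) ?_ ?_ ?_ ?_
  · intro z hzmem
    obtain ⟨hhf, hDeq⟩ := (mem_fiber a hi hj hij z).mp hzmem
    have hz : ∀ k : Fin n, k.1 ≠ i → k.1 ≠ j → z k = a k := by
      intro k hk1 hk2
      by_contra hne
      have hk : k ∈ Finset.univ.filter fun k => a k ≠ z k :=
        mem_filter.mpr ⟨mem_univ _, fun h => hne h.symm⟩
      rw [hDeq] at hk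
      rcases mem_insert.mp hk with rfl | h
      · exact hk1 rfl
      · exact hk2 (by rw [mem_singleton.mp h])
    have hmi : (⟨i, hi⟩ : Fin n) ∈ Finset.univ.filter fun k => a k ≠ z k := by
      rw [hDeq]; exact mem_insert_self _ _
    have hmj : (⟨j, hj⟩ : Fin n) ∈ Finset.univ.filter fun k => a k ≠ z k := by
      rw [hDeq]; exact mem_insert_of_mem (mem_singleton_self _)
    have hzi : z ⟨i, hi⟩ ≠ a ⟨i, hi⟩ := Ne.symm (mem_filter.mp hmi).2
    have hzj : z ⟨j, hj⟩ ≠ a ⟨j, hj⟩ := Ne.symm (mem_filter.mp hmj).2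
    exact mem_filter.mpr ⟨mem_univ _, (hf_char hxy pa hi hj hij hz hzi hzj).mp hhf⟩
  · intro w hw
    have hw' : Cond n x y i j w := (mem_filter.mp hw).2
    have hzwi : Function.update (Function.update a ⟨i, hi⟩ w.1) ⟨j, hj⟩ w.2 ⟨i, hi⟩ = w.1 := by
      rw [Function.update_of_ne hIJ, Function.update_self]
    have hzwj : Function.update (Function.update a ⟨i, hi⟩ w.1) ⟨j, hj⟩ w.2 ⟨j, hj⟩ = w.2 :=
      Function.update_self _ _ _
    have hzoff : ∀ k : Fin n, k.1 ≠ i → k.1 ≠ j →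
        Function.update (Function.update a ⟨i, hi⟩ w.1) ⟨j, hj⟩ w.2 k = a k := by
      intro k h1 h2
      rw [Function.update_of_ne (by simp only [ne_eq, Fin.mk.injEq, Fin.ext_iff]; omega),
        Function.update_of_ne (by simp only [ne_eq, Fin.mk.injEq, Fin.ext_iff]; omega)]
    have hc : Cond n x y i j
        (Function.update (Function.update a ⟨i, hi⟩ w.1) ⟨j, hj⟩ w.2 ⟨i, hi⟩,
         Function.update (Function.update a ⟨i, hi⟩ w.1) ⟨j, hj⟩ w.2 ⟨j, hj⟩) := by
      rw [hzwi, hzwj]; exact hw'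
    have hzi' : Function.update (Function.update a ⟨i, hi⟩ w.1) ⟨j, hj⟩ w.2 ⟨i, hi⟩
        ≠ a ⟨i, hi⟩ := by
      rw [hzwi, pa i hi]; exact hw'.1
    have hzj' : Function.update (Function.update a ⟨i, hi⟩ w.1) ⟨j, hj⟩ w.2 ⟨j, hj⟩
        ≠ a ⟨j, hj⟩ := by
      rw [hzwj, pa j hj]; exact hw'.2.1
    refine (mem_fiber a hi hj hij _).mpr ⟨(hf_char hxy pa hi hj hij hzoff hzi' hzj').mpr hc, ?_⟩
    ext k
    simp only [mem_filter, mem_univ, true_and, mem_insert, mem_singleton]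
    constructor
    · intro hk
      by_contra hcon
      push_neg at hcon
      exact hk (hzoff k (fun h => hcon.1 (Fin.ext h)) (fun h => hcon.2 (Fin.ext h))).symm
    · rintro (rfl | rfl)
      · rw [hzwi, pa i hi]; exact Ne.symm hw'.1
      · rw [hzwj, pa j hj]; exact Ne.symm hw'.2.1
  · intro z hzmem
    obtain ⟨hhf, hDeq⟩ := (mem_fiber a hi hj hij z).mp hzmem
    have hz : ∀ k : Fin n, k.1 ≠ i → k.1 ≠ j → z k = a k := by
      intro k hk1 hk2
      by_contra hne
      have hk : k ∈ Finset.univ.filter fun k => a k ≠ z k :=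
        mem_filter.mpr ⟨mem_univ _, fun h => hne h.symm⟩
      rw [hDeq] at hk
      rcases mem_insert.mp hk with rfl | h
      · exact hk1 rfl
      · exact hk2 (by rw [mem_singleton.mp h])
    funext k
    dsimp only
    by_cases hkj : k = ⟨j, hj⟩
    · subst hkj; rw [Function.update_self]
    · rw [Function.update_of_ne hkj]
      by_cases hki : k = ⟨i, hi⟩
      · subst hki; rw [Function.update_self]
      · rw [Function.update_of_ne hki]
        exact (hz k (fun h => hki (Fin.ext h)) (fun h => hkj (Fin.ext h))).symm
  · intro w hw
    have hzwi : Function.update (Function.update a ⟨i, hi⟩ w.1) ⟨j, hj⟩ w.2 ⟨i, hi⟩ = w.1 := by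
      rw [Function.update_of_ne hIJ, Function.update_self]
    have hzwj : Function.update (Function.update a ⟨i, hi⟩ w.1) ⟨j, hj⟩ w.2 ⟨j, hj⟩ = w.2 :=
      Function.update_self _ _ _
    dsimp only
    rw [hzwi, hzwj]

lemma P_card (n : ℕ) :
    (((range n) ×ˢ (range n)).filter fun p : ℕ × ℕ => p.1 < p.2).card * 2 = n * (n - 1) := by
  have h1 : (((range n) ×ˢ (range n)).filter fun p : ℕ × ℕ => p.1 < p.2).card
      = ((range n).sigma fun j => range j).card := by
    refine Finset.card_nbij' (fun p => ⟨p.2, p.1⟩) (fun s => (s.2, s.1)) ?_ ?_ ?_ ?_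
    · intro p hp
      simp only [Finset.mem_coe, mem_filter, Finset.mem_product, Finset.mem_range, Finset.mem_sigma] at *
      omega
    · intro s hs
      simp only [Finset.mem_coe, mem_filter, Finset.mem_product, Finset.mem_range, Finset.mem_sigma] at *
      omega
    · intro p _; rfl
    · intro s _; rfl
  rw [h1, Finset.card_sigma]
  simp only [Finset.card_range]
  exact Finset.sum_range_id_mul_two n

lemma IA_card (n : ℕ) (hn : 3 ≤ n) :
    ((((range n) ×ˢ (range n)).filter fun p : ℕ × ℕ => p.1 < p.2).filter
      fun p => p.2 = p.1 + 1 ∧ p.1 ≠ 0 ∧ p.2 + 1 ≠ n).card = n - 3 := by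
  have h1 : ((((range n) ×ˢ (range n)).filter fun p : ℕ × ℕ => p.1 < p.2).filter
      fun p => p.2 = p.1 + 1 ∧ p.1 ≠ 0 ∧ p.2 + 1 ≠ n).card = (Finset.Ico 1 (n - 2)).card := by
    refine Finset.card_nbij' (fun p => p.1) (fun k => (k, k + 1)) ?_ ?_ ?_ ?_
    · intro p hp
      simp only [Finset.mem_coe, mem_filter, Finset.mem_product, Finset.mem_range, Finset.mem_Ico] at *
      omega
    · intro k hk
      simp only [Finset.mem_coe, Finset.mem_Ico] at hk
      show (k, k + 1) ∈ _
      simp only [Finset.mem_coe, mem_filter, Finset.mem_product, Finset.mem_range]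
      exact ⟨⟨⟨show k < n by omega, show k + 1 < n by omega⟩, show k < k + 1 by omega⟩,
        trivial, show k ≠ 0 by omega, show k + 1 + 1 ≠ n by omega⟩
    · intro p hp
      simp only [Finset.mem_coe, mem_filter, Finset.mem_product, Finset.mem_range] at hp
      dsimp only
      exact Prod.ext rfl (by omega)
    · intro k _; rfl
  rw [h1, Nat.card_Ico]
  omega

theorem stmt_10 (q n : ℕ) (hq : 3 ≤ q)
    (a : Fin n → Fin q) (ha : a ∈ HFset q n)
    (hper : ∀ i : ℕ, ∀ h : i + 2 < n, a ⟨i, by omega⟩ = a ⟨i + 2, h⟩) :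
    (n = 2 → ((HFsphere a 2).card : ℚ) = (q : ℚ) ^ 2 - 3 * (q : ℚ) + 3) ∧
    (3 ≤ n → ((HFsphere a 2).card : ℚ) =
      (1 / 2) * ((n : ℚ) - 4) * ((n : ℚ) - 3) * ((q : ℚ) - 2) ^ 2
        + (n : ℚ) * (3 * (q : ℚ) ^ 2 - 13 * (q : ℚ) + 14)
        - 6 * (q : ℚ) ^ 2 + 27 * (q : ℚ) - 30) := by
  classical
  by_cases hn2 : 2 ≤ n
  swap
  · exact ⟨fun h => absurd h (by omega), fun h => absurd h (by omega)⟩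
  have haHF : isHF a := (Finset.mem_filter.mp ha).2
  have h0 : 0 < n := by omega
  have h1 : 1 < n := by omega
  have hxy : a ⟨0, h0⟩ ≠ a ⟨1, h1⟩ := haHF 0 h1
  have pa : ∀ m : ℕ, ∀ hm : m < n, a ⟨m, hm⟩ = pvn (a ⟨0, h0⟩) (a ⟨1, h1⟩) m := by
    intro m
    induction m using Nat.strong_induction_on with
    | _ m ih =>
      intro hm
      match m, hm with
      | 0, hm => simp [pvn]
      | 1, hm => simp [pvn]
      | (m + 2), hm =>
        rw [← hper m hm, ih m (by omega) (by omega)]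
        unfold pvn
        have hmod : (m + 2) % 2 = m % 2 := by omega
        rw [hmod]
  have hmaps : ∀ z ∈ HFsphere a 2,
      fmap a z ∈ ((range n ×ˢ range n).filter fun p : ℕ × ℕ => p.1 < p.2) := by
    intro z hz
    have hcard : (Finset.univ.filter fun k => a k ≠ z k).card = 2 :=
      (Finset.mem_filter.mp hz).2
    have hne : (Finset.univ.filter fun k => a k ≠ z k).Nonempty :=
      card_pos.mp (by omega)
    rw [fmap, dif_pos hne]
    have hlt := Finset.min'_lt_max'_of_card _ (by omega :
      1 < (Finset.univ.filter fun k => a k ≠ z k).card)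
    simp only [mem_filter, Finset.mem_product, Finset.mem_range]
    exact ⟨⟨((Finset.univ.filter fun k => a k ≠ z k).min' hne).2,
      ((Finset.univ.filter fun k => a k ≠ z k).max' hne).2⟩, hlt⟩
  have hsum := Finset.card_eq_sum_card_fiberwise hmaps
  have hfib : ∀ p ∈ ((range n ×ˢ range n).filter fun p : ℕ × ℕ => p.1 < p.2),
      ((HFsphere a 2).filter fun z => fmap a z = p).card
        = (if p.2 = p.1 + 1 then
            (if p.1 = 0 then (if p.2 + 1 = n then (q-1)*(q-2)+1 else (q-2)*(q-2))
             else if p.2 + 1 = n then (q-2)*(q-2) else (q-2)*(q-3))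
          else (q-2)*(q-2)) := by
    rintro ⟨i, j⟩ hp
    simp only [mem_filter, Finset.mem_product, Finset.mem_range] at hp
    obtain ⟨⟨hi, hj⟩, hij⟩ := hp
    rw [fiber_card hxy pa hi hj hij, cond_card hq _ _ hxy i j hij hj]
  have e1 : (HFsphere a 2).card
      = ∑ p ∈ ((range n ×ˢ range n).filter fun p : ℕ × ℕ => p.1 < p.2),
          (if p.2 = p.1 + 1 then
            (if p.1 = 0 then (if p.2 + 1 = n then (q-1)*(q-2)+1 else (q-2)*(q-2))
             else if p.2 + 1 = n then (q-2)*(q-2) else (q-2)*(q-3))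
          else (q-2)*(q-2)) :=
    hsum.trans (Finset.sum_congr rfl hfib)
  have hq1 : 1 ≤ q := by omega
  have hq2 : 2 ≤ q := by omega
  constructor
  · intro hn
    subst hn
    have hP : ((range 2 ×ˢ range 2).filter fun p : ℕ × ℕ => p.1 < p.2)
        = {((0 : ℕ), (1 : ℕ))} := by decide
    rw [e1, hP, Finset.sum_singleton]
    norm_num
    rw [Nat.cast_sub hq1, Nat.cast_sub hq2]
    push_cast
    ring
  · intro hn3
    have hq3 : 3 ≤ q := hq
    have hcast : ∀ p ∈ ((range n ×ˢ range n).filter fun p : ℕ × ℕ => p.1 < p.2),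
        ((if p.2 = p.1 + 1 then
            (if p.1 = 0 then (if p.2 + 1 = n then (q-1)*(q-2)+1 else (q-2)*(q-2))
             else if p.2 + 1 = n then (q-2)*(q-2) else (q-2)*(q-3))
          else (q-2)*(q-2) : ℕ) : ℚ)
          = ((q : ℚ) - 2) ^ 2
            - (if p.2 = p.1 + 1 ∧ p.1 ≠ 0 ∧ p.2 + 1 ≠ n then ((q : ℚ) - 2) else 0) := by
      rintro ⟨i, j⟩ hp
      simp only [mem_filter, Finset.mem_product, Finset.mem_range] at hp
      obtain ⟨⟨hi, hj⟩, hij⟩ := hp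
      dsimp only
      by_cases hadj : j = i + 1
      · rw [if_pos hadj]
        by_cases hi0 : i = 0
        · rw [if_pos hi0]
          by_cases hend : j + 1 = n
          · exfalso; omega
          · rw [if_neg hend, if_neg (by tauto)]
            rw [Nat.cast_mul, Nat.cast_sub hq2]
            push_cast
            ring
        · rw [if_neg hi0]
          by_cases hend : j + 1 = n
          · rw [if_pos hend, if_neg (by tauto)]
            rw [Nat.cast_mul, Nat.cast_sub hq2]
            push_cast
            ring
          · rw [if_neg hend, if_pos ⟨hadj, hi0, hend⟩]
            rw [Nat.cast_mul, Nat.cast_sub hq2, Nat.cast_sub hq3]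
            push_cast
            ring
      · rw [if_neg hadj, if_neg (by tauto)]
        rw [Nat.cast_mul, Nat.cast_sub hq2]
        push_cast
        ring
    have e2 : ((HFsphere a 2).card : ℚ)
        = ∑ p ∈ ((range n ×ˢ range n).filter fun p : ℕ × ℕ => p.1 < p.2),
            (((q : ℚ) - 2) ^ 2
              - (if p.2 = p.1 + 1 ∧ p.1 ≠ 0 ∧ p.2 + 1 ≠ n then ((q : ℚ) - 2) else 0)) := by
      rw [e1, Nat.cast_sum]
      exact Finset.sum_congr rfl hcast
    rw [e2, Finset.sum_sub_distrib, Finset.sum_const, ← Finset.sum_filter,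
      Finset.sum_const, nsmul_eq_mul, nsmul_eq_mul]
    have hPc := P_card n
    have hPc' : ((((range n) ×ˢ (range n)).filter fun p : ℕ × ℕ => p.1 < p.2).card : ℚ) * 2
        = (n : ℚ) * ((n : ℚ) - 1) := by
      have := congrArg (fun t : ℕ => (t : ℚ)) hPc
      push_cast [Nat.cast_sub (show 1 ≤ n by omega)] at this
      linarith
    have hIAc : (((((range n) ×ˢ (range n)).filter fun p : ℕ × ℕ => p.1 < p.2).filter
        fun p => p.2 = p.1 + 1 ∧ p.1 ≠ 0 ∧ p.2 + 1 ≠ n).card : ℚ) = (n : ℚ) - 3 := by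
      rw [IA_card n hn3]
      push_cast [Nat.cast_sub hn3]
      ring
    rw [hIAc]
    linear_combination (((q : ℚ) - 2) ^ 2 / 2) * hPc'
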